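/- Suppose η1, η2 > 0 and η1(μ2*−λ2*) + η2(μ1*−λ1*) > 0, with ω1², ω2² > 0. Then the cubic P*(z) = ω1²ω2² z³ + 2[ω1²(λ2*−μ2*) + ω2²(λ1*−μ1*)] z² − 2[ω1²η2 − 2(λ1*−μ1*)(λ2*−μ2*) + ω2²η1] z − 4[η1(λ2*−μ2*) + η2(λ1*−μ1*)] has three real roots, exactly one negative and two positive. -/

import Mathlib

private lemma cubic_factor (A3 A2 A1 A0 x1 x2 x3 : ℝ)
    (h1 : A3*x1^3+A2*x1^2+A1*x1+A0 = 0)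
    (h2 : A3*x2^3+A2*x2^2+A1*x2+A0 = 0)
    (h3 : A3*x3^3+A2*x3^2+A1*x3+A0 = 0)
    (d12 : x1 ≠ x2) (d13 : x1 ≠ x3) (d23 : x2 ≠ x3) :
    ∀ z : ℝ, A3*z^3+A2*z^2+A1*z+A0 = A3*(z-x1)*(z-x2)*(z-x3) := by
  have e12 : A3*(x1^2+x1*x2+x2^2)+A2*(x1+x2)+A1 = 0 := by
    have key : (x1-x2) * (A3*(x1^2+x1*x2+x2^2)+A2*(x1+x2)+A1) = 0 := by
      linear_combination h1 - h2
    rcases mul_eq_zero.mp key with h | h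
    · exact absurd (sub_eq_zero.mp h) d12
    · exact h
  have e23 : A3*(x2^2+x2*x3+x3^2)+A2*(x2+x3)+A1 = 0 := by
    have key : (x2-x3) * (A3*(x2^2+x2*x3+x3^2)+A2*(x2+x3)+A1) = 0 := by
      linear_combination h2 - h3
    rcases mul_eq_zero.mp key with h | h
    · exact absurd (sub_eq_zero.mp h) d23
    · exact h
  have hS1 : A3*(x1+x2+x3) + A2 = 0 := by
    have key : (x1-x3) * (A3*(x1+x2+x3) + A2) = 0 := by
      linear_combination e12 - e23
    rcases mul_eq_zero.mp key with h | h
    · exact absurd (sub_eq_zero.mp h) d13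
    · exact h
  have hS2 : A1 - A3*(x1*x2+x1*x3+x2*x3) = 0 := by
    linear_combination e12 - (x1+x2)*hS1
  have hS3 : A0 + A3*(x1*x2*x3) = 0 := by
    linear_combination h1 - x1^2*hS1 - x1*hS2
  intro z
  linear_combination z^2*hS1 + z*hS2 + hS3


private lemma cubic_big (A3 A2 A1 A0 t : ℝ) (h3 : 0 < A3) :
    ∃ M : ℝ, t < M ∧ 0 < A3*M^3+A2*M^2+A1*M+A0 ∧ A3*(-M)^3+A2*(-M)^2+A1*(-M)+A0 < 0 := by
  obtain ⟨M, hMdef⟩ : ∃ M : ℝ, M = 1 + |t| + (|A2|+|A1|+|A0|+1)/A3 := ⟨_, rfl⟩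
  have h0 : 0 ≤ (|A2|+|A1|+|A0|+1)/A3 := by positivity
  have hM1 : 1 ≤ M := by have := abs_nonneg t; rw [hMdef]; linarith
  have hM0 : 0 ≤ M := by linarith
  have htM : t < M := by have := le_abs_self t; rw [hMdef]; linarith
  have hA3M : |A2|+|A1|+|A0|+1 ≤ A3*M := by
    have hdiv : A3 * ((|A2|+|A1|+|A0|+1)/A3) = |A2|+|A1|+|A0|+1 := by field_simp
    rw [hMdef]
    nlinarith [abs_nonneg t]
  have hM2 : 1 ≤ M^2 := by nlinarith
  have hMM : M ≤ M^2 := by nlinarith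
  have h3' : |A2| * M^2 + |A1| * M^2 + |A0| * M^2 + M^2 ≤ A3*M^3 := by
    nlinarith [mul_le_mul_of_nonneg_right hA3M (sq_nonneg M)]
  have hA2 : -( |A2| * M^2 ) ≤ A2*M^2 := by
    nlinarith [mul_le_mul_of_nonneg_right (neg_abs_le A2) (sq_nonneg M)]
  have hA2' : A2*M^2 ≤ |A2| *M^2 := by
    nlinarith [mul_le_mul_of_nonneg_right (le_abs_self A2) (sq_nonneg M)]
  have hA1M : |A1| *M ≤ |A1| *M^2 := mul_le_mul_of_nonneg_left hMM (abs_nonneg A1)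
  have hA1 : -( |A1| * M^2 ) ≤ A1*M := by
    nlinarith [mul_le_mul_of_nonneg_right (neg_abs_le A1) hM0]
  have hA1' : A1*(-M) ≤ |A1| *M^2 := by
    nlinarith [mul_le_mul_of_nonneg_right (le_abs_self A1) hM0,
      mul_le_mul_of_nonneg_right (neg_abs_le A1) hM0]
  have hA0' : |A0| ≤ |A0| *M^2 := by nlinarith [mul_le_mul_of_nonneg_left hM2 (abs_nonneg A0)]
  have hA0a : -( |A0| * M^2 ) ≤ A0 := by nlinarith [neg_abs_le A0]
  have hA0b : A0 ≤ |A0| *M^2 := by nlinarith [le_abs_self A0]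
  refine ⟨M, htM, ?_, ?_⟩
  · linarith [h3', hA2, hA1, hA0a, hM2]
  · nlinarith [h3', hA2', hA1', hA0b, hM2, hA1M]

private lemma cubic_roots (A3 A2 A1 A0 t : ℝ) (h3 : 0 < A3) (h0 : 0 < A0)
    (ht : 0 < t) (hft : A3*t^3+A2*t^2+A1*t+A0 < 0) :
    ∃ x1 x2 x3 : ℝ,
      (∀ z : ℝ, A3*z^3+A2*z^2+A1*z+A0 = A3*(z-x1)*(z-x2)*(z-x3)) ∧
      0 < x1 ∧ 0 < x2 ∧ x3 < 0 := by
  obtain ⟨M, htM, hfM, hfM'⟩ := cubic_big A3 A2 A1 A0 t h3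
  set f : ℝ → ℝ := fun z => A3*z^3+A2*z^2+A1*z+A0 with hf
  have hc : Continuous f := by fun_prop
  have hf0 : f 0 = A0 := by simp [hf]
  -- root in (0, t)
  have hx1 : ∃ x ∈ Set.Ioo (0:ℝ) t, f x = 0 := by
    have h := intermediate_value_Ioo' ht.le hc.continuousOn (a := 0) (b := t)
    have : (0:ℝ) ∈ Set.Ioo (f t) (f 0) := by rw [hf0]; exact ⟨hft, h0⟩
    obtain ⟨x, hx, hfx⟩ := h this
    exact ⟨x, hx, hfx⟩
  -- root in (t, M)
  have hx2 : ∃ x ∈ Set.Ioo t M, f x = 0 := by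
    have h := intermediate_value_Ioo htM.le hc.continuousOn (a := t) (b := M)
    have : (0:ℝ) ∈ Set.Ioo (f t) (f M) := ⟨hft, hfM⟩
    obtain ⟨x, hx, hfx⟩ := h this
    exact ⟨x, hx, hfx⟩
  -- root in (-M, 0)
  have hx3 : ∃ x ∈ Set.Ioo (-M) (0:ℝ), f x = 0 := by
    have hM0 : (-M:ℝ) ≤ 0 := by linarith
    have h := intermediate_value_Ioo hM0 hc.continuousOn (a := -M) (b := 0)
    have : (0:ℝ) ∈ Set.Ioo (f (-M)) (f 0) := by rw [hf0]; exact ⟨hfM', h0⟩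
    obtain ⟨x, hx, hfx⟩ := h this
    exact ⟨x, hx, hfx⟩
  obtain ⟨x1, ⟨hx1a, hx1b⟩, hfx1⟩ := hx1
  obtain ⟨x2, ⟨hx2a, hx2b⟩, hfx2⟩ := hx2
  obtain ⟨x3, ⟨hx3a, hx3b⟩, hfx3⟩ := hx3
  refine ⟨x1, x2, x3, ?_, hx1a, by linarith, hx3b⟩
  exact cubic_factor A3 A2 A1 A0 x1 x2 x3 hfx1 hfx2 hfx3
    (by intro h; subst h; linarith) (by intro h; subst h; linarith)
    (by intro h; subst h; linarith)

theorem stmt_12 (l1 l2 m1 m2 e1 e2 w1 w2 : ℝ)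
    (hw1 : 0 < w1) (hw2 : 0 < w2) (he1 : 0 < e1) (he2 : 0 < e2)
    (hstab : 0 < e1*(m2 - l2) + e2*(m1 - l1)) :
    ∃ x1 x2 x3 : ℝ,
      (∀ z : ℝ, w1*w2*z^3 + 2*(w1*(l2 - m2) + w2*(l1 - m1))*z^2
          - 2*(w1*e2 - 2*(l1 - m1)*(l2 - m2) + w2*e1)*z
          - 4*(e1*(l2 - m2) + e2*(l1 - m1))
          = w1*w2*(z - x1)*(z - x2)*(z - x3)) ∧
      0 < x1 ∧ 0 < x2 ∧ x3 < 0 := by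
  have hA3 : 0 < w1*w2 := mul_pos hw1 hw2
  have hA0 : 0 < -(4*(e1*(l2 - m2) + e2*(l1 - m1))) := by nlinarith
  rcases lt_trichotomy (0:ℝ) (w1*(l2-m2) - w2*(l1-m1)) with hD | hD | hD
  · -- D > 0 : use t = -2a/w1
    have ha : l1 - m1 < 0 := by
      nlinarith [mul_pos he1 hD, mul_pos hw1 hstab, mul_pos he1 hw2, mul_pos hw1 he2]
    set t : ℝ := -(2*(l1-m1))/w1 with htdef
    have ht : 0 < t := div_pos (by linarith) hw1
    have hft : w1*w2*t^3 + (2*(w1*(l2 - m2) + w2*(l1 - m1)))*t^2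
        + (-(2*(w1*e2 - 2*(l1 - m1)*(l2 - m2) + w2*e1)))*t
        + (-(4*(e1*(l2 - m2) + e2*(l1 - m1)))) < 0 := by
      have heval : w1*w2*t^3 + (2*(w1*(l2 - m2) + w2*(l1 - m1)))*t^2
          + (-(2*(w1*e2 - 2*(l1 - m1)*(l2 - m2) + w2*e1)))*t
          + (-(4*(e1*(l2 - m2) + e2*(l1 - m1))))
          = (-(4*e1) * (w1*(l2-m2) - w2*(l1-m1)))/w1 := by
        rw [htdef]; field_simp; ring
      rw [heval]
      exact div_neg_of_neg_of_pos (by nlinarith [mul_pos he1 hD]) hw1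
    obtain ⟨x1, x2, x3, hfac, h1, h2, h3⟩ :=
      cubic_roots (w1*w2) (2*(w1*(l2 - m2) + w2*(l1 - m1)))
        (-(2*(w1*e2 - 2*(l1 - m1)*(l2 - m2) + w2*e1)))
        (-(4*(e1*(l2 - m2) + e2*(l1 - m1)))) t hA3 hA0 ht hft
    exact ⟨x1, x2, x3, fun z => by linear_combination hfac z, h1, h2, h3⟩
  · -- D = 0 : explicit roots
    have hD0 : w1*(l2-m2) - w2*(l1-m1) = 0 := hD.symm
    have ha : l1 - m1 < 0 := by
      have hD' : e1*(w1*(l2-m2) - w2*(l1-m1)) = 0 := by rw [hD0]; ring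
      nlinarith [mul_pos hw1 hstab, mul_pos he1 hw2, mul_pos hw1 he2]
    have hb : l2 - m2 < 0 := by
      nlinarith [mul_neg_of_pos_of_neg hw2 ha]
    have hrad : (0:ℝ) < (l2-m2)^2 + 2*w2*e2 + 2*e1*w2^2/w1 := by positivity
    set r : ℝ := Real.sqrt ((l2-m2)^2 + 2*w2*e2 + 2*e1*w2^2/w1) with hrdef
    have hr2 : r^2 = (l2-m2)^2 + 2*w2*e2 + 2*e1*w2^2/w1 := Real.sq_sqrt hrad.le
    have hrpos : 0 < r := Real.sqrt_pos.mpr hrad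
    have hr2' : w1*r^2 = w1*(l2-m2)^2 + 2*w1*w2*e2 + 2*e1*w2^2 := by
      rw [hr2]; field_simp
    have hrb : -(l2-m2) < r := by
      have hpos : (0:ℝ) < 2*w2*e2 + 2*e1*w2^2/w1 := by positivity
      nlinarith [hr2, hrpos, hpos]
    refine ⟨-(2*(l1-m1))/w1, (-(l2-m2)+r)/w2, (-(l2-m2)-r)/w2, ?_,
      div_pos (by linarith) hw1, div_pos (by linarith) hw2,
      div_neg_of_neg_of_pos (by linarith) hw2⟩
    intro z
    apply mul_left_cancel₀ (show (w1^2*w2^2:ℝ) ≠ 0 by positivity)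
    have gA : w1*(z - -(2*(l1-m1))/w1) = w1*z + 2*(l1-m1) := by field_simp; ring
    have gB : w2^2*((z - (-(l2-m2)+r)/w2)*(z - (-(l2-m2)-r)/w2))
        = w2^2*z^2 + 2*(l2-m2)*w2*z + ((l2-m2)^2 - r^2) := by
      field_simp; ring
    have step : w1^2*w2^2*(w1*w2*(z - -(2*(l1-m1))/w1)*(z - (-(l2-m2)+r)/w2)*(z - (-(l2-m2)-r)/w2))
        = (w1^2*w2)*((w1*z + 2*(l1-m1)) * (w2^2*z^2 + 2*(l2-m2)*w2*z + ((l2-m2)^2 - r^2))) := by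
      calc w1^2*w2^2*(w1*w2*(z - -(2*(l1-m1))/w1)*(z - (-(l2-m2)+r)/w2)*(z - (-(l2-m2)-r)/w2))
          = (w1^2*w2)*((w1*(z - -(2*(l1-m1))/w1)) * (w2^2*((z - (-(l2-m2)+r)/w2)*(z - (-(l2-m2)-r)/w2)))) := by
            ring
        _ = (w1^2*w2)*((w1*z + 2*(l1-m1)) * (w2^2*z^2 + 2*(l2-m2)*w2*z + ((l2-m2)^2 - r^2))) := by
            rw [gA, gB]
    rw [step]
    linear_combination (w1*w2*(w1*z+2*(l1-m1)))*hr2' + (-(4*e1*w1*w2^2))*hD0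
  · -- D < 0 : use t = -2b/w2
    have hb : l2 - m2 < 0 := by
      nlinarith [mul_pos he2 (neg_pos.mpr hD), mul_pos hw2 hstab, mul_pos he1 hw2, mul_pos hw1 he2]
    set t : ℝ := -(2*(l2-m2))/w2 with htdef
    have ht : 0 < t := div_pos (by linarith) hw2
    have hft : w1*w2*t^3 + (2*(w1*(l2 - m2) + w2*(l1 - m1)))*t^2
        + (-(2*(w1*e2 - 2*(l1 - m1)*(l2 - m2) + w2*e1)))*t
        + (-(4*(e1*(l2 - m2) + e2*(l1 - m1)))) < 0 := by
      have heval : w1*w2*t^3 + (2*(w1*(l2 - m2) + w2*(l1 - m1)))*t^2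
          + (-(2*(w1*e2 - 2*(l1 - m1)*(l2 - m2) + w2*e1)))*t
          + (-(4*(e1*(l2 - m2) + e2*(l1 - m1))))
          = (4*e2 * (w1*(l2-m2) - w2*(l1-m1)))/w2 := by
        rw [htdef]; field_simp; ring
      rw [heval]
      exact div_neg_of_neg_of_pos (by nlinarith [mul_pos he2 (neg_pos.mpr hD)]) hw2
    obtain ⟨x1, x2, x3, hfac, h1, h2, h3⟩ :=
      cubic_roots (w1*w2) (2*(w1*(l2 - m2) + w2*(l1 - m1)))
        (-(2*(w1*e2 - 2*(l1 - m1)*(l2 - m2) + w2*e1)))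
        (-(4*(e1*(l2 - m2) + e2*(l1 - m1)))) t hA3 hA0 ht hft
    exact ⟨x1, x2, x3, fun z => by linear_combination hfac z, h1, h2, h3⟩
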